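/- (Closure property, strengthened form) Let f : {0,1}^n → {0,1} be a Boolean function, i ∈ [n], and b ∈ {0,1}. If for every k ∈ U(f_{ib}) and every b' ∈ {0,1} we have i ∉ U(f_{k b'}), then U1(f, U(f_{ib})) ⊆ U(f_{ib}). -/

import Mathlib

/-- `f` depends on variable `i`: flipping the `i`-th coordinate of some input changes the value. -/
def BoolFnDependsOn {ι : Type*} [DecidableEq ι] (f : (ι → Bool) → Bool) (i : ι) : Prop :=
  ∃ a : ι → Bool, f (Function.update a i (!a i)) ≠ f a

/-- The restriction `f|_{x_j = b}`, a Boolean function on the remaining variables. -/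
def restrictBit {ι : Type*} [DecidableEq ι] (f : (ι → Bool) → Bool) (j : ι) (b : Bool) :
    ({i : ι // i ≠ j} → Bool) → Bool :=
  fun y => f (fun i => if h : i = j then b else y ⟨i, h⟩)

/-- `k ∈ U(f_{jb})`: variable `k` (a variable of `f_{jb}`, i.e. `k ≠ j`) is useless for the
restriction `f_{jb}`. -/
def UselessIn {ι : Type*} [DecidableEq ι] (f : (ι → Bool) → Bool) (j : ι) (b : Bool)
    (k : ι) : Prop :=
  ∃ h : k ≠ j, ¬ BoolFnDependsOn (restrictBit f j b) ⟨k, h⟩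

/-- `U(f_{ib})` as a set of indices in `[n]`. -/
def Uset {n : ℕ} (f : (Fin n → Bool) → Bool) (i : Fin n) (b : Bool) : Set (Fin n) :=
  {k | UselessIn f i b k}

/-- `U1(f, S) = ⋃_{j ∈ S} (U(f_{j0}) ∪ U(f_{j1}))`. -/
def U1 {n : ℕ} (f : (Fin n → Bool) → Bool) (S : Set (Fin n)) : Set (Fin n) :=
  ⋃ j ∈ S, (Uset f j false ∪ Uset f j true)


lemma useless_iff {ι : Type*} [DecidableEq ι] (f : (ι → Bool) → Bool) (j : ι) (b' : Bool)
    (m : ι) (hm : m ≠ j) :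
    ¬ BoolFnDependsOn (restrictBit f j b') ⟨m, hm⟩ ↔
      ∀ x : ι → Bool, x j = b' → f (Function.update x m (!x m)) = f x := by
  unfold BoolFnDependsOn restrictBit
  push_neg
  constructor
  · intro H x hx
    have := H (fun p => x p.1)
    convert this using 2
    · funext k
      by_cases hk : k = j
      · subst hk; simp [Function.update_of_ne (Ne.symm hm) , hx]
      · simp only [dif_neg hk]
        by_cases hkm : k = m
        · subst hkm
          simp [Function.update_self, Function.update, hm]
        · simp [Function.update_of_ne hkm, Function.update, hkm, hk]
    · funext k
      by_cases hk : k = j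
      · subst hk; simp [hx]
      · simp [dif_neg hk]
  · intro H y
    set x : ι → Bool := fun k => if h : k = j then b' else y ⟨k, h⟩ with hxdef
    have hx : x j = b' := by simp [hxdef]
    have := H x hx
    convert this using 2
    · funext k
      by_cases hk : k = j
      · subst hk; simp [Function.update_of_ne (Ne.symm hm), hxdef]
      · simp only [dif_neg hk]
        by_cases hkm : k = m
        · subst hkm
          simp [Function.update, hxdef, hm]
        · simp [Function.update, hkm, Subtype.ext_iff, hxdef, hk]

/-- Closure property, strengthened form: if no `k ∈ U(f_{ib})` has `i ∈ U(f_{k b'})` for any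
bit `b'`, then `U1(f, U(f_{ib})) ⊆ U(f_{ib})`. -/
theorem closure_property_strong (n : ℕ) (f : (Fin n → Bool) → Bool) (i : Fin n) (b : Bool)
    (h : ∀ k ∈ Uset f i b, ∀ b' : Bool, ¬ UselessIn f k b' i) :
    U1 f (Uset f i b) ⊆ Uset f i b := by
  intro m hm
  simp only [U1, Set.mem_iUnion, Set.mem_union] at hm
  obtain ⟨j, hj, hm⟩ := hm
  have hjU : j ∈ Uset f i b := hj
  obtain ⟨hji, Hj⟩ := hjU
  obtain ⟨b', hmb⟩ : ∃ b' : Bool, UselessIn f j b' m := by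
    rcases hm with h1 | h1
    · exact ⟨false, h1⟩
    · exact ⟨true, h1⟩
  obtain ⟨hmj, Hm⟩ := hmb
  have hij : i ≠ j := Ne.symm hji
  have hdep : BoolFnDependsOn (restrictBit f j b') ⟨i, hij⟩ := by
    have := h j hj b'
    unfold UselessIn at this
    push_neg at this
    exact this hij
  have hmi : m ≠ i := by
    intro hmeq
    subst hmeq
    exact Hm hdep
  refine ⟨hmi, ?_⟩
  rw [useless_iff]
  rw [useless_iff] at Hm Hj
  intro x hx
  by_cases hxj : x j = b'
  · exact Hm x hxj
  · have hxj' : x j = !b' := by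
      cases hb : x j <;> cases b' <;> simp_all
    set x' := Function.update x j (!x j) with hx'def
    have hx'j : x' j = b' := by simp [hx'def, hxj']
    have hx'i : x' i = b := by simp [hx'def, Function.update_of_ne hij, hx]
    have e1 : f (Function.update x' m (!x' m)) = f x' := Hm x' hx'j
    have e2 : f x' = f x := Hj x hx
    have hxm : x' m = x m := by simp [hx'def, Function.update_of_ne hmj]
    have e3 : Function.update x' m (!x' m) =
        Function.update (Function.update x m (!x m)) j (!(Function.update x m (!x m)) j) := by
      rw [hx'def]
      rw [Function.update_of_ne hmj, Function.update_comm hmj.symm]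
      rw [Function.update_of_ne hmj.symm]
    have hxi2 : (Function.update x m (!x m)) i = b := by
      rw [Function.update_of_ne hmi.symm, hx]
    have e4 : f (Function.update (Function.update x m (!x m)) j
        (!(Function.update x m (!x m)) j)) = f (Function.update x m (!x m)) :=
      Hj _ hxi2
    calc f (Function.update x m (!x m)) = f (Function.update x' m (!x' m)) := by rw [e3, e4]
      _ = f x' := e1
      _ = f x := e2
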